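/- Let G be a group and λ : G × G → {0,1} ⊂ ℤ a function whose mod-2 reduction is a 2-cocycle, i.e., d̂λ(g,h,k) := λ(h,k) - λ(gh,k) + λ(g,hk) - λ(g,h) is even for all g,h,k. Then for all g,h,k ∈ G, λ(h,k)·λ(g,hk) - λ(g,h)·λ(gh,k) ≡ d̂λ(g,h,k)/2 (mod 2). In other words, λ ∪₁ λ ≡ (1/2) d̂λ (mod 2). -/
import Mathlib

/-- For a `{0,1}`-valued function `λ` on `G × G` whose integer coboundary `d̂λ` is even,
one has `λ∪₁λ ≡ (1/2)·d̂λ (mod 2)`, i.e.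
`λ(h,k)λ(g,hk) - λ(g,h)λ(gh,k) ≡ d̂λ(g,h,k)/2 (mod 2)`. -/
theorem stmt_11 {G : Type*} [Group G] (lam : G → G → ℤ)
    (hval : ∀ g h : G, lam g h = 0 ∨ lam g h = 1)
    (heven : ∀ g h k : G,
      Even (lam h k - lam (g * h) k + lam g (h * k) - lam g h)) :
    ∀ g h k : G,
      Int.ModEq 2 (lam h k * lam g (h * k) - lam g h * lam (g * h) k)
        ((lam h k - lam (g * h) k + lam g (h * k) - lam g h) / 2) := by
  intro g h k
  obtain ⟨m, hm⟩ := heven g h k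
  unfold Int.ModEq
  obtain h1 | h1 := hval h k <;> obtain h2 | h2 := hval g (h * k) <;>
    obtain h3 | h3 := hval g h <;> obtain h4 | h4 := hval (g * h) k <;>
    rw [h1, h2, h3, h4] at hm ⊢ <;> norm_num <;> omega
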